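/- Let λ1 ∈ (0,1), p1 ∈ (0,1], p2 ∈ [0,1], and suppose λ1 < p1/(1 + p1·p2). Define ρ := λ1·(1 − p1 + λ1·p1·p2)/(p1·(1 − λ1)·(1 − λ1·p2)) and π0 := (p1 − λ1·(1 + p1·p2))/(p1·(1 − λ1)). Then p2·(1 − p1·λ1)·π0 + ∑' k : ℕ, p2·(1 − p1)·ρ^{k+1}·π0 = p2·(1 − λ1 − λ1·p2). -/

import Mathlib

theorem service_rate_queue2_dominant1 (l1 p1 p2 : ℝ)
    (hl1 : l1 ∈ Set.Ioo (0:ℝ) 1) (hp1 : p1 ∈ Set.Ioc (0:ℝ) 1) (hp2 : p2 ∈ Set.Icc (0:ℝ) 1)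
    (hstab : l1 < p1 / (1 + p1*p2)) :
    p2 * (1 - p1*l1) * ((p1 - l1*(1 + p1*p2)) / (p1 * (1 - l1))) +
      (∑' k : ℕ, p2 * (1 - p1) *
        (l1 * (1 - p1 + l1*p1*p2) / (p1 * (1 - l1) * (1 - l1*p2)))^(k+1) *
        ((p1 - l1*(1 + p1*p2)) / (p1 * (1 - l1)))) =
    p2 * (1 - l1 - l1*p2) := by
  obtain ⟨hl0, hl1'⟩ := hl1
  obtain ⟨hp10, hp11⟩ := hp1
  obtain ⟨hp20, hp21⟩ := hp2
  have hden1 : (0:ℝ) < 1 - l1 := by linarith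
  have hlp2 : l1 * p2 < 1 := by nlinarith
  have hden2 : (0:ℝ) < 1 - l1*p2 := by linarith
  have hpos : (0:ℝ) < 1 + p1*p2 := by nlinarith
  have hstab' : l1 * (1 + p1*p2) < p1 := by
    exact (lt_div_iff₀ hpos).mp hstab
  set ρ : ℝ := l1 * (1 - p1 + l1*p1*p2) / (p1 * (1 - l1) * (1 - l1*p2)) with hρ
  have hD : (0:ℝ) < p1 * (1 - l1) * (1 - l1*p2) := by positivity
  have hρ0 : 0 ≤ ρ := by
    apply div_nonneg _ (le_of_lt hD); nlinarith [mul_nonneg hl0.le (mul_nonneg hp10.le hp20)]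
  have hρ1 : ρ < 1 := by
    rw [hρ, div_lt_one hD]; nlinarith
  have hsum : ∑' k : ℕ, p2 * (1 - p1) * ρ^(k+1) *
      ((p1 - l1*(1 + p1*p2)) / (p1 * (1 - l1)))
      = p2 * (1 - p1) * ρ * ((p1 - l1*(1 + p1*p2)) / (p1 * (1 - l1))) * (1-ρ)⁻¹ := by
    have := tsum_geometric_of_lt_one hρ0 hρ1
    calc ∑' k : ℕ, p2 * (1 - p1) * ρ^(k+1) * ((p1 - l1*(1 + p1*p2)) / (p1 * (1 - l1)))
        = ∑' k : ℕ, (p2 * (1 - p1) * ρ * ((p1 - l1*(1 + p1*p2)) / (p1 * (1 - l1)))) * ρ^k := by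
          apply tsum_congr; intro k; ring
      _ = _ := by rw [tsum_mul_left, this]
  rw [hsum]
  have h1ρ : 1 - ρ = (p1 - l1*(1 + p1*p2)) / (p1 * (1 - l1) * (1 - l1*p2)) := by
    rw [hρ]; field_simp; ring
  rw [h1ρ, hρ]
  have hne : p1 - l1*(1 + p1*p2) ≠ 0 := by linarith
  have hne2 : 1 - l1*p2 ≠ 0 := hden2.ne'
  have hne3 : 1 - l1 ≠ 0 := hden1.ne'
  have hne4 : p1 ≠ 0 := hp10.ne'
  have hne5 : 1 - p2*l1 ≠ 0 := by rw [mul_comm]; exact hne2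
  have hne6 : p1 - l1*(1 + p2*p1) ≠ 0 := by rw [mul_comm p2]; exact hne
  field_simp
  ring
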